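/- Let W be a real D×N matrix with nonzero columns w_1,…,w_N such that Σ_{i=1}^N C_i(W) = D. Then W can be written as W = Q B P, where Q is a D×D real orthogonal matrix, P is an N×N permutation matrix, and B is a rectangular block-diagonal matrix whose k-th diagonal block is √λ_k · R_k with λ_k > 0 and R_k a D_k×N_k semiorthogonal matrix, where Σ_k D_k = D and Σ_k N_k = N. -/

import Mathlib

open scoped BigOperators
open Matrix

/-- The capacity of feature `i` for an embedding matrix `W`:
`C_i = (w_i·w_i)² / (∑_j (w_i·w_j)²)`, with `C_i = 0` when `w_i = 0`
(automatic from `0 / 0 = 0`). -/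
noncomputable def capacity {D N : ℕ} (W : Matrix (Fin D) (Fin N) ℝ) (i : Fin N) : ℝ :=
  (∑ a, W a i * W a i) ^ 2 / ∑ j, (∑ a, W a i * W a j) ^ 2

lemma core {D N : ℕ} (W : Matrix (Fin D) (Fin N) ℝ)
    (hdiag : ∀ a b, a ≠ b → ∑ i, W a i * W b i = 0)
    (hnz : ∀ i, ∃ a, W a i ≠ 0)
    (heff : ∑ i, capacity W i = (D : ℝ)) :
    (∀ a, 0 < ∑ j, W a j * W a j) ∧
    (∀ i a b, W a i ≠ 0 → W b i ≠ 0 →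
      (∑ j, W a j * W a j) = (∑ j, W b j * W b j)) := by
  classical
  set d : Fin D → ℝ := fun a => ∑ j, W a j * W a j with hd
  have hd0 : ∀ a, 0 ≤ d a := fun a => Finset.sum_nonneg fun j _ => mul_self_nonneg _
  have hpos : ∀ a i, W a i ≠ 0 → 0 < d a := by
    intro a i h
    have h1 : 0 < W a i * W a i := mul_self_pos.2 h
    have h2 : W a i * W a i ≤ d a :=
      Finset.single_le_sum (f := fun j => W a j * W a j)
        (fun j _ => mul_self_nonneg _) (Finset.mem_univ i)
    linarith
  have hzero : ∀ a i, d a = 0 → W a i = 0 := by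
    intro a i h
    by_contra hne
    exact absurd h (ne_of_gt (hpos a i hne))
  -- denominator identity
  have hden : ∀ i, (∑ j, (∑ a, W a i * W a j) ^ 2) = ∑ a, d a * W a i ^ 2 := by
    intro i
    have h1 : ∀ j, (∑ a, W a i * W a j) ^ 2
        = ∑ a, ∑ b, (W a i * W a j) * (W b i * W b j) := by
      intro j; rw [sq, Finset.sum_mul_sum]
    calc (∑ j, (∑ a, W a i * W a j) ^ 2)
        = ∑ j, ∑ a, ∑ b, (W a i * W a j) * (W b i * W b j) := by
          exact Finset.sum_congr rfl fun j _ => h1 j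
      _ = ∑ a, ∑ b, ∑ j, (W a i * W a j) * (W b i * W b j) := by
          rw [Finset.sum_comm]
          exact Finset.sum_congr rfl fun a _ => Finset.sum_comm
      _ = ∑ a, ∑ b, (W a i * W b i) * ∑ j, W a j * W b j := by
          refine Finset.sum_congr rfl fun a _ => Finset.sum_congr rfl fun b _ => ?_
          rw [Finset.mul_sum]
          exact Finset.sum_congr rfl fun j _ => by ring
      _ = ∑ a, d a * W a i ^ 2 := by
          refine Finset.sum_congr rfl fun a _ => ?_
          rw [Finset.sum_eq_single a]
          · rw [hd]; ring
          · intro b _ hb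
            rw [hdiag a b (Ne.symm hb), mul_zero]
          · intro h; exact absurd (Finset.mem_univ a) h
  -- T
  set T : Fin N → ℝ := fun i => ∑ a, W a i ^ 2 / d a with hT
  have hCle : ∀ i, capacity W i ≤ T i := by
    intro i
    have hcs := Finset.sum_mul_sq_le_sq_mul_sq Finset.univ
      (fun a => Real.sqrt (d a) * W a i) (fun a => W a i / Real.sqrt (d a))
    have e1 : ∀ a, (Real.sqrt (d a) * W a i) * (W a i / Real.sqrt (d a)) = W a i * W a i := by
      intro a
      by_cases h : W a i = 0
      · simp [h]
      · have hda := hpos a i h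
        have hs : Real.sqrt (d a) ≠ 0 := ne_of_gt (Real.sqrt_pos.2 hda)
        field_simp
    have e2 : ∀ a, (Real.sqrt (d a) * W a i) ^ 2 = d a * W a i ^ 2 := by
      intro a; rw [mul_pow, Real.sq_sqrt (hd0 a)]
    have e3 : ∀ a, (W a i / Real.sqrt (d a)) ^ 2 = W a i ^ 2 / d a := by
      intro a; rw [div_pow, Real.sq_sqrt (hd0 a)]
    rw [Finset.sum_congr rfl fun a _ => e1 a, Finset.sum_congr rfl fun a _ => e2 a,
      Finset.sum_congr rfl fun a _ => e3 a] at hcs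
    -- hcs : (∑ a, W a i * W a i)^2 ≤ (∑ a, d a * W a i^2) * T i
    obtain ⟨a0, ha0⟩ := hnz i
    have hDen : 0 < ∑ a, d a * W a i ^ 2 := by
      have h1 : 0 < d a0 * W a0 i ^ 2 :=
        mul_pos (hpos a0 i ha0) (by positivity)
      have h2 : d a0 * W a0 i ^ 2 ≤ ∑ a, d a * W a i ^ 2 :=
        Finset.single_le_sum (f := fun a => d a * W a i ^ 2)
          (fun a _ => mul_nonneg (hd0 a) (sq_nonneg _)) (Finset.mem_univ a0)
      linarith
    rw [capacity, hden i, div_le_iff₀ hDen]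
    calc (∑ a, W a i * W a i) ^ 2 ≤ (∑ a, d a * W a i ^ 2) * T i := hcs
      _ = T i * (∑ a, d a * W a i ^ 2) := mul_comm _ _
  have hTsum : (∑ i, T i) = ∑ a, d a / d a := by
    rw [Finset.sum_comm]
    refine Finset.sum_congr rfl fun a _ => ?_
    rw [← Finset.sum_div]
    congr 1
    rw [hd]
    exact Finset.sum_congr rfl fun j _ => (sq (W a j)).symm ▸ by ring
  have hTleD : (∑ i, T i) ≤ (D : ℝ) := by
    rw [hTsum]
    calc (∑ a, d a / d a) ≤ ∑ _a : Fin D, (1 : ℝ) := by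
          refine Finset.sum_le_sum fun a _ => ?_
          by_cases h : d a = 0
          · simp [h]
          · rw [div_self h]
      _ = (D : ℝ) := by simp
  have hsumTC : (∑ i, T i) = ∑ i, capacity W i := by
    have h1 : (∑ i, capacity W i) ≤ ∑ i, T i := Finset.sum_le_sum fun i _ => hCle i
    linarith [heff ▸ h1, hTleD, heff]
  have hCeq : ∀ i, capacity W i = T i := by
    intro i
    have := (Finset.sum_eq_sum_iff_of_le (fun i _ => hCle i)).1 hsumTC.symm
    exact this i (Finset.mem_univ i)
  have hdpos : ∀ a, 0 < d a := by
    have hsum1 : (∑ a, d a / d a) = (D : ℝ) := by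
      rw [← hTsum, hsumTC, heff]
    have hle : ∀ a : Fin D, a ∈ Finset.univ → d a / d a ≤ 1 := by
      intro a _
      by_cases h : d a = 0
      · simp [h]
      · rw [div_self h]
    have : ∀ a : Fin D, a ∈ Finset.univ → d a / d a = 1 := by
      have hs : (∑ a, d a / d a) = ∑ _a : Fin D, (1:ℝ) := by
        rw [hsum1]; simp
      exact fun a ha => ((Finset.sum_eq_sum_iff_of_le hle).1 hs a ha)
    intro a
    have h1 := this a (Finset.mem_univ a)
    have : d a ≠ 0 := by
      intro h; rw [h] at h1; simp at h1
    exact lt_of_le_of_ne (hd0 a) (Ne.symm this)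
  refine ⟨hdpos, ?_⟩
  intro i a b ha hb
  -- equality analysis
  obtain ⟨a0, ha0⟩ := hnz i
  set n : ℝ := ∑ c, W c i * W c i with hn
  set Den : ℝ := ∑ c, d c * W c i ^ 2 with hDen
  have hnpos : 0 < n := by
    have h1 : 0 < W a0 i * W a0 i := mul_self_pos.2 ha0
    have h2 : W a0 i * W a0 i ≤ n :=
      Finset.single_le_sum (f := fun c => W c i * W c i)
        (fun c _ => mul_self_nonneg _) (Finset.mem_univ a0)
    linarith
  have hDenpos : 0 < Den := by
    have h1 : 0 < d a0 * W a0 i ^ 2 := mul_pos (hdpos a0) (by positivity)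
    have h2 : d a0 * W a0 i ^ 2 ≤ Den :=
      Finset.single_le_sum (f := fun c => d c * W c i ^ 2)
        (fun c _ => mul_nonneg (hd0 c) (sq_nonneg _)) (Finset.mem_univ a0)
    linarith
  set μ : ℝ := Den / n with hμ
  have hTi : T i = n ^ 2 / Den := by
    rw [← hCeq i, capacity, hden i]
  have hterm : ∀ c, W c i ^ 2 * (d c - μ) ^ 2 / d c
      = d c * W c i ^ 2 - 2 * μ * W c i ^ 2 + μ ^ 2 * (W c i ^ 2 / d c) := by
    intro c
    have h := (hdpos c).ne'
    field_simp
    ring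
  have hZ : (∑ c, W c i ^ 2 * (d c - μ) ^ 2 / d c) = 0 := by
    rw [Finset.sum_congr rfl fun c _ => hterm c]
    rw [Finset.sum_add_distrib, Finset.sum_sub_distrib, ← Finset.mul_sum, ← Finset.mul_sum]
    have hn2 : (∑ c, W c i ^ 2) = n := by
      rw [hn]; exact Finset.sum_congr rfl fun c _ => by ring
    rw [hn2, ← hDen]
    have hTi' : (∑ c, W c i ^ 2 / d c) = n ^ 2 / Den := by rw [← hTi]
    rw [hTi', hμ]
    field_simp
    ring
  have hnonneg : ∀ c : Fin D, c ∈ Finset.univ → 0 ≤ W c i ^ 2 * (d c - μ) ^ 2 / d c := by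
    intro c _
    exact div_nonneg (mul_nonneg (sq_nonneg _) (sq_nonneg _)) (hd0 c)
  have hall := (Finset.sum_eq_zero_iff_of_nonneg hnonneg).1 hZ
  have hval : ∀ c, W c i ≠ 0 → d c = μ := by
    intro c hc
    have h1 := hall c (Finset.mem_univ c)
    have h2 : W c i ^ 2 * (d c - μ) ^ 2 = 0 := by
      have := (hdpos c).ne'
      field_simp at h1
      rw [mul_zero] at h1; exact h1
    have h3 : (d c - μ) ^ 2 = 0 := by
      rcases mul_eq_zero.1 h2 with h | h
      · exact absurd h (pow_ne_zero 2 hc)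
      · exact h
    have := pow_eq_zero_iff (n := 2) (by norm_num) |>.1 h3
    linarith
  show d a = d b
  rw [hval a ha, hval b hb]

/-- An identification of `Σ k, Fin (m k)` with `Fin n` when `∑ k, m k = n`, used to view a
block-diagonal matrix (with blocks of sizes `Dk k × Nk k`) as a `D × N` matrix. -/
noncomputable def finSigmaEquiv {K n : ℕ} (m : Fin K → ℕ) (h : ∑ k, m k = n) :
    (Σ k : Fin K, Fin (m k)) ≃ Fin n :=
  Fintype.equivFinOfCardEq (by simpa using h)

/-- Every efficient matrix (nonzero columns and `∑ i, C_i(W) = D`) can be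
written as `W = Q B P` with `Q` orthogonal, `P` a permutation matrix, and `B`
block-diagonal with blocks `√λ_k • R_k`, where `λ_k > 0`, `R_k` is a `D_k × N_k`
semiorthogonal matrix, `∑ D_k = D` and `∑ N_k = N`. -/
theorem efficient_eq_blockDiagonal_semiorthogonal
    {D N : ℕ} (W : Matrix (Fin D) (Fin N) ℝ)
    (hnz : ∀ i, Wᵀ i ≠ 0)
    (heff : ∑ i, capacity W i = (D : ℝ)) :
    ∃ (K : ℕ) (Dk Nk : Fin K → ℕ) (hD : ∑ k, Dk k = D) (hN : ∑ k, Nk k = N)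
      (lam : Fin K → ℝ) (_ : ∀ k, 0 < lam k)
      (R : ∀ k, Matrix (Fin (Dk k)) (Fin (Nk k)) ℝ) (_ : ∀ k, R k * (R k)ᵀ = 1)
      (Q : Matrix (Fin D) (Fin D) ℝ) (_ : Q * Qᵀ = 1)
      (σ : Equiv.Perm (Fin N)),
      W = Q *
          (Matrix.reindex (finSigmaEquiv Dk hD) (finSigmaEquiv Nk hN)
            (Matrix.blockDiagonal' fun k => Real.sqrt (lam k) • R k)) *
          σ.permMatrix ℝ := by
  classical
  have hnz' : ∀ i, ∃ a, W a i ≠ 0 := by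
    intro i
    have h := hnz i
    rw [Function.ne_iff] at h
    obtain ⟨a, ha⟩ := h
    exact ⟨a, by simpa using ha⟩
  have hS : (W * Wᵀ).IsHermitian := by
    have h := Matrix.isHermitian_mul_conjTranspose_self W
    simpa using h
  set U : Matrix (Fin D) (Fin D) ℝ := (hS.eigenvectorUnitary : Matrix (Fin D) (Fin D) ℝ)
    with hUdef
  have hstar : star U = Uᵀ := by
    rw [Matrix.star_eq_conjTranspose]
    ext i j
    simp [Matrix.conjTranspose_apply]
  have hU1 : U * Uᵀ = 1 := by
    rw [← hstar]; exact (Matrix.mem_unitaryGroup_iff).mp hS.eigenvectorUnitary.2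
  have hU2 : Uᵀ * U = 1 := by
    rw [← hstar]; exact (Matrix.mem_unitaryGroup_iff').mp hS.eigenvectorUnitary.2
  set W0 : Matrix (Fin D) (Fin N) ℝ := Uᵀ * W with hW0def
  have hWU : W = U * W0 := by rw [hW0def, ← Matrix.mul_assoc, hU1, Matrix.one_mul]
  have hGram : W0ᵀ * W0 = Wᵀ * W := by
    rw [hW0def, Matrix.transpose_mul, Matrix.transpose_transpose]
    rw [Matrix.mul_assoc Wᵀ U _, ← Matrix.mul_assoc U Uᵀ W, hU1, Matrix.one_mul]
  have hGram' : ∀ i j, (∑ a, W0 a i * W0 a j) = ∑ a, W a i * W a j := by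
    intro i j
    have h := congrFun (congrFun hGram i) j
    simpa [Matrix.mul_apply, Matrix.transpose_apply] using h
  have hcap : ∀ i, capacity W0 i = capacity W i := by
    intro i; unfold capacity
    rw [hGram' i i]
    congr 1
    exact Finset.sum_congr rfl fun j _ => by rw [hGram' i j]
  have hnz0 : ∀ i, ∃ a, W0 a i ≠ 0 := by
    intro i
    by_contra h
    push_neg at h
    obtain ⟨a, ha⟩ := hnz' i
    have h1 : (∑ c, W0 c i * W0 c i) = ∑ c, W c i * W c i := hGram' i i
    have h2 : (∑ c, W0 c i * W0 c i) = 0 := by simp [h]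
    have h3 : 0 < W a i * W a i := mul_self_pos.2 ha
    have h4 : W a i * W a i ≤ ∑ c, W c i * W c i :=
      Finset.single_le_sum (f := fun c => W c i * W c i)
        (fun c _ => mul_self_nonneg _) (Finset.mem_univ a)
    rw [← h1, h2] at h4
    linarith
  have hdiag0 : ∀ a b, a ≠ b → (∑ i, W0 a i * W0 b i) = 0 := by
    intro a b hab
    have hdd : W0 * W0ᵀ = Matrix.diagonal (RCLike.ofReal ∘ hS.eigenvalues) := by
      rw [hW0def, Matrix.transpose_mul, Matrix.transpose_transpose]
      rw [Matrix.mul_assoc Uᵀ W _, ← Matrix.mul_assoc W Wᵀ U]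
      have hsp : W * Wᵀ = U * Matrix.diagonal (RCLike.ofReal ∘ hS.eigenvalues) * Uᵀ := by
        rw [← hstar]; exact hS.spectral_theorem
      conv_lhs => rw [hsp]
      simp only [← Matrix.mul_assoc]
      rw [hU2, Matrix.one_mul, Matrix.mul_assoc, hU2, Matrix.mul_one]
    have h := congrFun (congrFun hdd a) b
    rw [Matrix.diagonal_apply_ne _ hab] at h
    simpa [Matrix.mul_apply, Matrix.transpose_apply] using h
  obtain ⟨hdpos, hsupp⟩ := core W0 hdiag0 hnz0
    (by rw [Finset.sum_congr rfl fun i _ => hcap i, heff])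
  set d : Fin D → ℝ := fun a => ∑ j, W0 a j * W0 a j with hddef
  choose a0 ha0 using hnz0
  set V : Finset ℝ := Finset.image d Finset.univ with hV
  set K := V.card with hK
  have hmem : ∀ a, d a ∈ V := fun a => Finset.mem_image_of_mem d (Finset.mem_univ a)
  set f : Fin D → Fin K := fun a => V.equivFin ⟨d a, hmem a⟩ with hf
  set lam : Fin K → ℝ := fun k => ((V.equivFin.symm k : V) : ℝ) with hlam
  have hlamf : ∀ a, lam (f a) = d a := by
    intro a; simp only [hlam, hf, Equiv.symm_apply_apply]
  have hlam_inj : Function.Injective lam := fun k k' h =>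
    V.equivFin.symm.injective (Subtype.coe_injective h)
  have hlam_pos : ∀ k, 0 < lam k := by
    intro k
    have hmem2 : lam k ∈ V := (V.equivFin.symm k).2
    rw [hV] at hmem2
    obtain ⟨a, _, ha⟩ := Finset.mem_image.1 hmem2
    rw [← ha]; exact hdpos a
  set g : Fin N → Fin K := fun i => f (a0 i) with hg
  have hfg : ∀ a i, W0 a i ≠ 0 → f a = g i := by
    intro a i h
    apply hlam_inj
    rw [hlamf]
    show d a = lam (f (a0 i))
    rw [hlamf]
    exact hsupp i a (a0 i) h (ha0 i)
  have hzero0 : ∀ a i, f a ≠ g i → W0 a i = 0 := by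
    intro a i h; by_contra hc; exact h (hfg a i hc)
  set Dk : Fin K → ℕ := fun k => Fintype.card {a : Fin D // f a = k} with hDk
  set Nk : Fin K → ℕ := fun k => Fintype.card {i : Fin N // g i = k} with hNk
  have hD : ∑ k, Dk k = D := by
    have h1 : Fintype.card ((k : Fin K) × {a : Fin D // f a = k}) = D := by
      simpa using Fintype.card_congr (Equiv.sigmaFiberEquiv f)
    simpa [Fintype.card_sigma, hDk] using h1
  have hN : ∑ k, Nk k = N := by
    have h1 : Fintype.card ((k : Fin K) × {i : Fin N // g i = k}) = N := by
      simpa using Fintype.card_congr (Equiv.sigmaFiberEquiv g)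
    simpa [Fintype.card_sigma, hNk] using h1
  set eD : Fin D ≃ Σ k : Fin K, Fin (Dk k) :=
    (Equiv.sigmaFiberEquiv f).symm.trans
      (Equiv.sigmaCongrRight fun k => Fintype.equivFin {a : Fin D // f a = k}) with heDdef
  set eN : Fin N ≃ Σ k : Fin K, Fin (Nk k) :=
    (Equiv.sigmaFiberEquiv g).symm.trans
      (Equiv.sigmaCongrRight fun k => Fintype.equivFin {i : Fin N // g i = k}) with heNdef
  have heD1 : ∀ a, (eD a).1 = f a := fun a => rfl
  have heN1 : ∀ i, (eN i).1 = g i := fun i => rfl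
  have hfeD : ∀ x : Σ k : Fin K, Fin (Dk k), f (eD.symm x) = x.1 := by
    intro x
    have h := heD1 (eD.symm x)
    rw [Equiv.apply_symm_apply] at h
    exact h.symm
  have hgeN : ∀ x : Σ k : Fin K, Fin (Nk k), g (eN.symm x) = x.1 := by
    intro x
    have h := heN1 (eN.symm x)
    rw [Equiv.apply_symm_apply] at h
    exact h.symm
  set R : ∀ k : Fin K, Matrix (Fin (Dk k)) (Fin (Nk k)) ℝ :=
    fun k => Matrix.of fun p q => W0 (eD.symm ⟨k, p⟩) (eN.symm ⟨k, q⟩) / Real.sqrt (lam k)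
    with hR
  -- restricting column sums to a block
  have hcol : ∀ (k : Fin K) (a : Fin D), f a = k → ∀ a' : Fin D,
      (∑ i, W0 a i * W0 a' i)
        = ∑ q : Fin (Nk k), W0 a (eN.symm ⟨k, q⟩) * W0 a' (eN.symm ⟨k, q⟩) := by
    intro k a hak a'
    have h1 : (∑ i, W0 a i * W0 a' i)
        = ∑ x : (Σ l : Fin K, Fin (Nk l)), W0 a (eN.symm x) * W0 a' (eN.symm x) :=
      Fintype.sum_equiv eN _ _ (fun i => by rw [Equiv.symm_apply_apply])
    rw [h1, ← Finset.univ_sigma_univ, Finset.sum_sigma]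
    refine Finset.sum_eq_single k (fun l _ hl => Finset.sum_eq_zero fun q _ => ?_)
      (fun h => absurd (Finset.mem_univ k) h)
    have : W0 a (eN.symm ⟨l, q⟩) = 0 := by
      apply hzero0
      rw [hak, hgeN ⟨l, q⟩]
      exact fun h => hl h.symm
    rw [this, zero_mul]
  have hRorth : ∀ k, R k * (R k)ᵀ = 1 := by
    intro k
    ext p p'
    rw [Matrix.mul_apply]
    have hfa : f (eD.symm ⟨k, p⟩) = k := hfeD ⟨k, p⟩
    have hsum : (∑ q, R k p q * (R k)ᵀ q p')
        = (∑ q : Fin (Nk k),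
            W0 (eD.symm ⟨k, p⟩) (eN.symm ⟨k, q⟩) * W0 (eD.symm ⟨k, p'⟩) (eN.symm ⟨k, q⟩))
          / lam k := by
      rw [Finset.sum_div]
      refine Finset.sum_congr rfl fun q _ => ?_
      rw [Matrix.transpose_apply, hR]
      show (W0 (eD.symm ⟨k, p⟩) (eN.symm ⟨k, q⟩) / Real.sqrt (lam k))
          * (W0 (eD.symm ⟨k, p'⟩) (eN.symm ⟨k, q⟩) / Real.sqrt (lam k)) = _
      rw [div_mul_div_comm, Real.mul_self_sqrt (le_of_lt (hlam_pos k))]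
    rw [hsum, ← hcol k _ hfa _]
    by_cases hpp : p = p'
    · subst hpp
      have hda : (∑ i, W0 (eD.symm ⟨k, p⟩) i * W0 (eD.symm ⟨k, p⟩) i) = lam k := by
        show d (eD.symm ⟨k, p⟩) = lam k
        rw [← hlamf (eD.symm ⟨k, p⟩), hfa]
      rw [hda, div_self (ne_of_gt (hlam_pos k)), Matrix.one_apply_eq]
    · have hne : eD.symm ⟨k, p⟩ ≠ eD.symm ⟨k, p'⟩ := by
        intro h
        exact hpp (by simpa using eD.symm.injective h)
      rw [hdiag0 _ _ hne, zero_div, Matrix.one_apply_ne hpp]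
  set ED := finSigmaEquiv Dk hD with hED
  set EN := finSigmaEquiv Nk hN with hEN
  set π : Equiv.Perm (Fin D) := eD.trans ED with hπ
  set σ : Equiv.Perm (Fin N) := (eN.trans EN).symm with hσ
  set B := Matrix.reindex ED EN (Matrix.blockDiagonal' fun k => Real.sqrt (lam k) • R k)
    with hB
  have hkey : W0 = π.permMatrix ℝ * B * σ.permMatrix ℝ := by
    rw [Equiv.Perm.permMatrix, Equiv.Perm.permMatrix]
    rw [PEquiv.toMatrix_toPEquiv_mul, PEquiv.mul_toMatrix_toPEquiv]
    ext a j
    rw [Matrix.submatrix_apply, Matrix.submatrix_apply, id_eq]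
    rw [hB, Matrix.reindex_apply, Matrix.submatrix_apply]
    have h1 : ED.symm (π a) = eD a := by simp [hπ]
    have h2 : EN.symm (σ.symm j) = eN j := by simp [hσ]
    simp only [id_eq]
    rw [h1, h2]
    rcases hx : eD a with ⟨k, p⟩
    rcases hy : eN j with ⟨l, q⟩
    have hfa : f a = k := by rw [← heD1 a, hx]
    have hgj : g j = l := by rw [← heN1 j, hy]
    by_cases hkl : k = l
    · subst hkl
      rw [Matrix.blockDiagonal'_apply_eq]
      have ha' : eD.symm ⟨k, p⟩ = a := by rw [← hx, Equiv.symm_apply_apply]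
      have hj' : eN.symm ⟨k, q⟩ = j := by rw [← hy, Equiv.symm_apply_apply]
      rw [Matrix.smul_apply, hR]
      show W0 a j = Real.sqrt (lam k) • (W0 (eD.symm ⟨k, p⟩) (eN.symm ⟨k, q⟩) / Real.sqrt (lam k))
      rw [ha', hj', smul_eq_mul,
        mul_div_cancel₀ _ (ne_of_gt (Real.sqrt_pos.2 (hlam_pos k)))]
    · rw [Matrix.blockDiagonal'_apply_ne _ _ _ hkl]
      exact hzero0 a j (by rw [hfa, hgj]; exact hkl)
  refine ⟨K, Dk, Nk, hD, hN, lam, hlam_pos, R, hRorth, U * π.permMatrix ℝ, ?_, σ, ?_⟩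
  · have hperm : π.permMatrix ℝ * (π.permMatrix ℝ)ᵀ = 1 := by
      rw [Equiv.Perm.permMatrix, ← PEquiv.toMatrix_symm, ← PEquiv.toMatrix_trans,
        ← Equiv.toPEquiv_symm, ← Equiv.toPEquiv_trans]
      simp [Equiv.toPEquiv_refl]
    rw [Matrix.transpose_mul, Matrix.mul_assoc, ← Matrix.mul_assoc (π.permMatrix ℝ),
      hperm, Matrix.one_mul, hU1]
  · show W = U * π.permMatrix ℝ * B * σ.permMatrix ℝ
    rw [hWU, hkey]
    simp only [← Matrix.mul_assoc]
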